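/- Let G be a connected graph with a minimum-size cluster vertex deletion set of size t (i.e., deleting t vertices leaves a disjoint union of cliques). Then c(G) ≤ ⌈t/2⌉ + 1. The same bound holds when t is the deletion-to-stars number (deleting t vertices leaves a disjoint union of stars). -/

import Mathlib

open SimpleGraph

variable {V : Type*}

/-- A (positional) strategy for `k` cops on the graph `G`: an initial placement and a
move function; each cop may stay or move to an adjacent vertex. -/
structure CopStrat (G : SimpleGraph V) (k : ℕ) where
  init : Fin k → V
  move : (Fin k → V) → V → Fin k → V
  valid : ∀ c r i, move c r i = c i ∨ G.Adj (c i) (move c r i)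

/-- A strategy for the robber: an initial placement (knowing the cops' placement) and a
move function; the robber may stay or move to an adjacent vertex. -/
structure RobStrat (G : SimpleGraph V) (k : ℕ) where
  init : (Fin k → V) → V
  move : (Fin k → V) → V → V
  valid : ∀ c r, move c r = r ∨ G.Adj r (move c r)

/-- The play determined by initial placements and move functions: position of the cops and
of the robber after `n` full rounds (cops move first in each round). -/
def gplay {k : ℕ} (ci : Fin k → V) (cm : (Fin k → V) → V → Fin k → V)
    (ri : (Fin k → V) → V) (rm : (Fin k → V) → V → V) : ℕ → (Fin k → V) × V
  | 0 => (ci, ri ci)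
  | n + 1 =>
    let p := gplay ci cm ri rm n
    let c' := cm p.1 p.2
    (c', rm c' p.2)

/-- The robber is caught: at some moment (either on a cops' move, or because the
positions already coincide) a cop occupies the robber's vertex. -/
def gCaught {k : ℕ} (ci : Fin k → V) (cm : (Fin k → V) → V → Fin k → V)
    (ri : (Fin k → V) → V) (rm : (Fin k → V) → V → V) : Prop :=
  ∃ n, ∃ i,
    (gplay ci cm ri rm n).1 i = (gplay ci cm ri rm n).2 ∨
      cm (gplay ci cm ri rm n).1 (gplay ci cm ri rm n).2 i = (gplay ci cm ri rm n).2

/-- `k` cops have a winning strategy on `G`. -/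
def CopsWin (G : SimpleGraph V) (k : ℕ) : Prop :=
  ∃ CS : CopStrat G k, ∀ RS : RobStrat G k,
    gCaught CS.init CS.move RS.init RS.move

/-- The cop number of `G`. -/
noncomputable def copNumber (G : SimpleGraph V) : ℕ := sInf {k | CopsWin G k}


/-- A graph is a disjoint union of cliques. -/
def IsClusterGraph {W : Type*} (H : SimpleGraph W) : Prop :=
  ∀ ⦃x y z : W⦄, H.Adj x y → H.Adj y z → x = z ∨ H.Adj x z

/-- A graph is a disjoint union of stars: every edge has an endpoint whose unique
neighbour is the other endpoint. -/
def IsStarForest {W : Type*} (H : SimpleGraph W) : Prop :=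
  ∀ ⦃x y : W⦄, H.Adj x y → (∀ z, H.Adj x z → z = y) ∨ (∀ z, H.Adj y z → z = x)

/-- The cluster vertex deletion number of `G`. -/
noncomputable def cvdNumber {V : Type*} (G : SimpleGraph V) : ℕ :=
  sInf {t | ∃ U : Finset V, IsClusterGraph (G.induce ((↑U : Set V)ᶜ)) ∧ U.card = t}

/-- The deletion-to-stars number of `G`. -/
noncomputable def dtsNumber {V : Type*} (G : SimpleGraph V) : ℕ :=
  sInf {t | ∃ U : Finset V, IsStarForest (G.induce ((↑U : Set V)ᶜ)) ∧ U.card = t}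


/- ### Auxiliary machinery -/
section Aux
open Classical

variable {V : Type*} {G : SimpleGraph V}

section Basic
variable (G : SimpleGraph V)

lemma dist_succ_of_adj (hG : G.Connected) {x y z : V} (h : G.Adj y z) :
    G.dist x z ≤ G.dist x y + 1 := by
  have h0 := hG.dist_triangle (u := x) (v := y) (w := z)
  have h1 : G.dist y z ≤ 1 := by
    have := dist_le (Walk.cons h Walk.nil)
    simpa using this
  omega

lemma exists_step (hG : G.Connected) {x z : V} (h : x ≠ z) :
    ∃ y, G.Adj x y ∧ G.dist y z + 1 = G.dist x z := by
  obtain ⟨w, hw⟩ := (hG x z).exists_walk_length_eq_dist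
  have hpos : 0 < G.dist x z := hG.pos_dist_of_ne h
  have hlen : 0 < w.length := by omega
  have hnn : ¬ w.Nil := by rw [Walk.not_nil_iff_lt_length]; omega
  have hadj : G.Adj x (w.getVert 1) := by
    have := w.adj_getVert_succ (i := 0) hlen
    rwa [w.getVert_zero] at this
  refine ⟨w.getVert 1, hadj, ?_⟩
  have h1 : G.dist (w.getVert 1) z ≤ w.length - 1 := by
    have h2 : G.dist (w.getVert 1) z ≤ w.tail.length := dist_le (w.tail)
    have h3 := Walk.length_tail_add_one hnn
    omega
  have h2 : G.dist x z ≤ G.dist x (w.getVert 1) + G.dist (w.getVert 1) z :=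
    hG.dist_triangle
  have h3 : G.dist x (w.getVert 1) ≤ 1 := by
    have := dist_le (Walk.cons hadj Walk.nil)
    simpa using this
  omega

variable {G}

/-- A step function along shortest paths toward a target. -/
noncomputable def stepTo (hG : G.Connected) (z x : V) : V :=
  if h : x = z then x else Classical.choose (exists_step G hG h)

lemma stepTo_spec (hG : G.Connected) {z x : V} (h : x ≠ z) :
    G.Adj x (stepTo hG z x) ∧ G.dist (stepTo hG z x) z + 1 = G.dist x z := by
  rw [stepTo, dif_neg h]; exact Classical.choose_spec (exists_step G hG h)

end Basic

lemma dist_getVert_le (hG : G.Connected) {u v : V} (w : G.Walk u v) :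
    ∀ j, G.dist u (w.getVert j) ≤ j := by
  intro j
  induction j with
  | zero => simp [w.getVert_zero]
  | succ j ih =>
    by_cases hj : j < w.length
    · have hadj := w.adj_getVert_succ hj
      have := dist_succ_of_adj G hG (x := u) hadj
      omega
    · rw [w.getVert_of_length_le (show w.length ≤ j+1 by omega)]
      have := dist_le w
      omega

lemma dist_getVert_to_end (hG : G.Connected) {u v : V} (w : G.Walk u v) :
    ∀ j, G.dist (w.getVert j) v ≤ w.length - j := by
  induction w with
  | nil => intro j; simp [Walk.getVert_of_length_le]
  | cons h p ih =>
    intro j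
    cases j with
    | zero =>
      have := dist_le (Walk.cons h p)
      simpa using this
    | succ j =>
      rw [Walk.getVert_cons_succ]
      have := ih j
      simp only [Walk.length_cons]
      omega

lemma shortest_getVert_dist (hG : G.Connected) {u v : V} (w : G.Walk u v)
    (hw : w.length = G.dist u v) {j : ℕ} (hj : j ≤ w.length) :
    G.dist u (w.getVert j) = j := by
  have h1 := dist_getVert_le hG w j
  have h2 := dist_getVert_to_end hG w j
  have h3 : G.dist u v ≤ G.dist u (w.getVert j) + G.dist (w.getVert j) v :=
    hG.dist_triangle
  omega

variable {W : Type*} {H : SimpleGraph W}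

lemma reachable_closed {S : Set W} (hS : ∀ a b, a ∈ S → H.Adj a b → b ∈ S)
    {x y : W} (hx : x ∈ S) (h : H.Reachable x y) : y ∈ S := by
  obtain ⟨w⟩ := h
  induction w with
  | nil => exact hx
  | @cons a b c hab p ih => exact ih (hS _ _ hx hab)

def domSet (H : SimpleGraph W) (x : W) : Set W :=
  {z | H.Reachable x z ∧ ∀ y, H.Reachable x y → z = y ∨ H.Adj z y}

lemma domSet_nonempty (hH : IsClusterGraph H ∨ IsStarForest H) (x : W) :
    (domSet H x).Nonempty := by
  rcases hH with hH | hH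
  · refine ⟨x, Reachable.refl x, fun y hy => ?_⟩
    refine reachable_closed (S := {y | x = y ∨ H.Adj x y}) ?_ (Or.inl rfl) hy
    rintro a b (rfl | hxa) hab
    · exact Or.inr hab
    · exact hH hxa hab
  · by_cases hiso : ∀ y, ¬ H.Adj x y
    · refine ⟨x, Reachable.refl x, fun y hy => ?_⟩
      left
      have : y ∈ ({x} : Set W) := by
        refine reachable_closed ?_ rfl hy
        rintro a b rfl hab; exact absurd hab (hiso b)
      exact this.symm
    · push_neg at hiso
      obtain ⟨y, hxy⟩ := hiso
      rcases hH hxy with hA | hB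
      · -- x's unique neighbour is y; center is y
        refine ⟨y, Reachable.refl x |>.trans hxy.reachable, fun w hw => ?_⟩
        refine reachable_closed (S := {w | y = w ∨ H.Adj y w}) ?_ (Or.inr hxy.symm) hw
        rintro a b (rfl | hya) hab
        · exact Or.inr hab
        · rcases hH hab with h1 | h2
          · exact Or.inl (h1 y hya.symm)
          · by_cases hax : a = x
            · subst hax; exact Or.inl (hA b hab).symm
            · rcases hH hya with h1' | h2'
              · exact absurd (h1' x hxy.symm).symm hax
              · exact Or.inl (h2' b hab).symm
      · -- y's unique neighbour is x; center is x
        refine ⟨x, Reachable.refl x, fun w hw => ?_⟩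
        refine reachable_closed (S := {w | x = w ∨ H.Adj x w}) ?_ (Or.inl rfl) hw
        rintro a b (rfl | hxa) hab
        · exact Or.inr hab
        · rcases hH hab with h1 | h2
          · exact Or.inl (h1 x hxa.symm)
          · rcases hH hxa with h1' | h2'
            · have hay : y = a := h1' y hxy
              subst hay
              exact Or.inl (hB b hab).symm
            · exact Or.inl (h2' b hab).symm

lemma domSet_eq_of_adj {x x' : W} (h : H.Adj x x') : domSet H x = domSet H x' := by
  have hr : ∀ y, H.Reachable x y ↔ H.Reachable x' y :=
    fun y => ⟨fun hy => (h.symm.reachable).trans hy, fun hy => (h.reachable).trans hy⟩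
  unfold domSet
  ext z
  simp only [Set.mem_setOf_eq, hr]

lemma some_congr {α : Type*} {s t : Set α} (h : s = t) (hs : s.Nonempty) (ht : t.Nonempty) :
    hs.some = ht.some := by subst h; rfl

noncomputable def repOf (hH : IsClusterGraph H ∨ IsStarForest H) (x : W) : W :=
  (domSet_nonempty hH x).some

lemma repOf_mem (hH : IsClusterGraph H ∨ IsStarForest H) (x : W) :
    repOf hH x ∈ domSet H x := (domSet_nonempty hH x).some_mem

lemma repOf_adj_of_adj (hH : IsClusterGraph H ∨ IsStarForest H) {x x' : W} (h : H.Adj x x') :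
    repOf hH x = repOf hH x' :=
  some_congr (domSet_eq_of_adj h) _ _

lemma repOf_dom (hH : IsClusterGraph H ∨ IsStarForest H) (x : W) :
    repOf hH x = x ∨ H.Adj (repOf hH x) x :=
  (repOf_mem hH x).2 x (Reachable.refl x)

-- ### descent lemma
lemma exists_of_descend {P : ℕ → Prop} (f : ℕ → ℕ) (h : ∀ n, P n ∨ f (n + 1) < f n) :
    ∃ n, P n := by
  by_contra hc
  push_neg at hc
  have key : ∀ n, f n + n ≤ f 0 := by
    intro n
    induction n with
    | zero => omega
    | succ n ih =>
      rcases h n with hp | hlt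
      · exact absurd hp (hc n)
      · omega
  have := key (f 0 + 1)
  omega

-- ### enumeration of U
noncomputable def enumU (U : Finset V) : Fin U.card → V :=
  fun j => ↑(U.equivFin.symm j)

lemma enumU_surj (U : Finset V) {x : V} (hx : x ∈ U) : ∃ j, enumU U j = x := by
  refine ⟨U.equivFin ⟨x, hx⟩, ?_⟩
  simp [enumU]

def npU (U : Finset V) : ℕ := (U.card + 1) / 2

noncomputable def ptA (U : Finset V) (i : Fin (npU U)) : V :=
  enumU U ⟨2 * i, by have := i.2; unfold npU at this; omega⟩

noncomputable def ptB (U : Finset V) (i : Fin (npU U)) : V :=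
  if h : 2 * i + 1 < U.card then enumU U ⟨2 * i + 1, h⟩ else ptA U i

noncomputable def gwalk (hG : G.Connected) (U : Finset V) (i : Fin (npU U)) :
    G.Walk (ptA U i) (ptB U i) :=
  ((hG (ptA U i) (ptB U i)).exists_walk_length_eq_dist).choose

lemma gwalk_len (hG : G.Connected) (U : Finset V) (i : Fin (npU U)) :
    (gwalk hG U i).length = G.dist (ptA U i) (ptB U i) :=
  ((hG (ptA U i) (ptB U i)).exists_walk_length_eq_dist).choose_spec

noncomputable def plen (hG : G.Connected) (U : Finset V) (i : Fin (npU U)) : ℕ :=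
  (gwalk hG U i).length

noncomputable def pl (hG : G.Connected) (U : Finset V) (i : Fin (npU U)) (j : ℕ) : V :=
  (gwalk hG U i).getVert j

lemma pl_zero (hG : G.Connected) (U : Finset V) (i : Fin (npU U)) : pl hG U i 0 = ptA U i :=
  (gwalk hG U i).getVert_zero

lemma pl_last (hG : G.Connected) (U : Finset V) (i : Fin (npU U)) :
    pl hG U i (plen hG U i) = ptB U i :=
  (gwalk hG U i).getVert_length

lemma pl_dist (hG : G.Connected) (U : Finset V) (i : Fin (npU U)) {j : ℕ}
    (hj : j ≤ plen hG U i) : G.dist (ptA U i) (pl hG U i j) = j :=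
  shortest_getVert_dist hG _ (gwalk_len hG U i) hj

lemma pl_inj (hG : G.Connected) (U : Finset V) (i : Fin (npU U)) {j j' : ℕ}
    (hj : j ≤ plen hG U i) (hj' : j' ≤ plen hG U i) (h : pl hG U i j = pl hG U i j') :
    j = j' := by
  have h1 := pl_dist hG U i hj
  have h2 := pl_dist hG U i hj'
  rw [h] at h1; omega

lemma pl_adj (hG : G.Connected) (U : Finset V) (i : Fin (npU U)) {j : ℕ}
    (hj : j < plen hG U i) : G.Adj (pl hG U i j) (pl hG U i (j + 1)) :=
  (gwalk hG U i).adj_getVert_succ hj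

noncomputable def shadow (hG : G.Connected) (U : Finset V) (i : Fin (npU U)) (r : V) : ℕ :=
  min (G.dist (ptA U i) r) (plen hG U i)

lemma shadow_le (hG : G.Connected) (U : Finset V) (i : Fin (npU U)) (r : V) :
    shadow hG U i r ≤ plen hG U i := min_le_right _ _

lemma shadow_pl (hG : G.Connected) (U : Finset V) (i : Fin (npU U)) {j : ℕ}
    (hj : j ≤ plen hG U i) : shadow hG U i (pl hG U i j) = j := by
  rw [shadow, pl_dist hG U i hj]; omega

lemma shadow_lip (hG : G.Connected) (U : Finset V) (i : Fin (npU U)) {r r' : V}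
    (h : r' = r ∨ G.Adj r r') :
    shadow hG U i r' ≤ shadow hG U i r + 1 ∧ shadow hG U i r ≤ shadow hG U i r' + 1 := by
  rcases h with rfl | h
  · omega
  · have h1 := dist_succ_of_adj G (x := ptA U i) hG h
    have h2 := dist_succ_of_adj G (x := ptA U i) hG h.symm
    unfold shadow; omega

def onPath (hG : G.Connected) (U : Finset V) (i : Fin (npU U)) (x : V) : Prop :=
  ∃ j, j ≤ plen hG U i ∧ pl hG U i j = x

noncomputable def idxP (hG : G.Connected) (U : Finset V) (i : Fin (npU U)) (x : V) : ℕ :=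
  if h : onPath hG U i x then h.choose else 0

lemma idxP_spec (hG : G.Connected) (U : Finset V) (i : Fin (npU U)) {x : V}
    (h : onPath hG U i x) :
    idxP hG U i x ≤ plen hG U i ∧ pl hG U i (idxP hG U i x) = x := by
  rw [idxP, dif_pos h]; exact h.choose_spec

lemma idxP_pl (hG : G.Connected) (U : Finset V) (i : Fin (npU U)) {j : ℕ}
    (hj : j ≤ plen hG U i) : idxP hG U i (pl hG U i j) = j := by
  have h : onPath hG U i (pl hG U i j) := ⟨j, hj, rfl⟩
  obtain ⟨h1, h2⟩ := idxP_spec hG U i h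
  exact pl_inj hG U i h1 hj h2

def towardIdx (a b : ℕ) : ℕ := if a < b then a + 1 else if b < a then a - 1 else a

lemma towardIdx_eq {a b : ℕ} (h1 : b ≤ a + 1) (h2 : a ≤ b + 1) : towardIdx a b = b := by
  unfold towardIdx; split_ifs <;> omega

lemma towardIdx_le {a b m : ℕ} (ha : a ≤ m) (hb : b ≤ m) : towardIdx a b ≤ m := by
  unfold towardIdx; split_ifs <;> omega

noncomputable def guardMove (hG : G.Connected) (U : Finset V) (i : Fin (npU U)) (x r : V) : V :=
  if h : onPath hG U i x then
    pl hG U i (towardIdx (idxP hG U i x) (shadow hG U i r))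
  else stepTo hG (ptB U i) x

lemma guardMove_on (hG : G.Connected) (U : Finset V) (i : Fin (npU U)) {x : V} (r : V)
    {j : ℕ} (hj : j ≤ plen hG U i) (hx : x = pl hG U i j) :
    guardMove hG U i x r = pl hG U i (towardIdx j (shadow hG U i r)) := by
  subst hx
  rw [guardMove, dif_pos ⟨j, hj, rfl⟩, idxP_pl hG U i hj]

-- the guard reaches and keeps the shadow
lemma guard_reach (hG : G.Connected) (U : Finset V) (i : Fin (npU U)) (x r : ℕ → V)
    (hx : ∀ n, x (n + 1) = guardMove hG U i (x n) (r n))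
    (hrv : ∀ n, r (n + 1) = r n ∨ G.Adj (r n) (r (n + 1))) :
    ∃ N, ∀ n, N ≤ n → x (n + 1) = pl hG U i (shadow hG U i (r n)) := by
  set m := plen hG U i with hm
  set b : ℕ → ℕ := fun n => shadow hG U i (r n) with hb
  have hblip : ∀ n, b (n + 1) ≤ b n + 1 ∧ b n ≤ b (n + 1) + 1 := by
    intro n
    exact shadow_lip hG U i (by rcases hrv n with h | h; exact Or.inl h; exact Or.inr h)
  have hble : ∀ n, b n ≤ m := fun n => shadow_le hG U i (r n)
  -- persistence
  have pers : ∀ n, x (n + 1) = pl hG U i (b n) → x (n + 2) = pl hG U i (b (n + 1)) := by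
    intro n h
    have h1 := guardMove_on hG U i (r (n + 1)) (hble n) h
    rw [hx (n + 1), h1, towardIdx_eq (hblip n).1 (hblip n).2]
  have persN : ∀ N, x (N + 1) = pl hG U i (b N) → ∀ n, N ≤ n → x (n + 1) = pl hG U i (b n) := by
    intro N hN n hn
    induction n with
    | zero => have : N = 0 := by omega
              subst this; exact hN
    | succ n ih =>
      rcases Nat.lt_or_ge N (n + 1) with h | h
      · have := ih (by omega)
        exact pers n this
      · have : N = n + 1 := by omega
        subst this; exact hN
  -- reach the path
  have h1 : ∃ n, onPath hG U i (x n) := by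
    apply exists_of_descend (f := fun n => G.dist (x n) (ptB U i))
    intro n
    by_cases h : onPath hG U i (x n)
    · exact Or.inl h
    · right
      have hxne : x n ≠ ptB U i := by
        intro he; exact h ⟨m, le_refl _, by rw [hm, pl_last]; exact he.symm⟩
      have := (stepTo_spec hG hxne).2
      rw [hx n, guardMove, dif_neg h]
      omega
  obtain ⟨n₀, hn₀⟩ := h1
  obtain ⟨j₀, hj₀, hpj₀⟩ := hn₀
  -- index sequence
  set J : ℕ → ℕ := fun q => Nat.rec j₀ (fun q jq => towardIdx jq (b (n₀ + q))) q with hJ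
  have hJ0 : J 0 = j₀ := rfl
  have hJs : ∀ q, J (q + 1) = towardIdx (J q) (b (n₀ + q)) := fun q => rfl
  have hJinv : ∀ q, J q ≤ m ∧ x (n₀ + q) = pl hG U i (J q) := by
    intro q
    induction q with
    | zero => exact ⟨hj₀, hpj₀.symm⟩
    | succ q ih =>
      obtain ⟨h1, h2⟩ := ih
      constructor
      · rw [hJs]; exact towardIdx_le h1 (hble _)
      · rw [hJs, show n₀ + (q + 1) = (n₀ + q) + 1 by omega,
          hx (n₀ + q), guardMove_on hG U i _ h1 h2]
  -- find a near moment
  have h2 : ∃ q, J q ≤ b (n₀ + q) + 1 ∧ b (n₀ + q) ≤ J q + 1 := by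
    by_contra hfar
    push_neg at hfar
    have hfar' : ∀ q, J q + 2 ≤ b (n₀ + q) ∨ b (n₀ + q) + 2 ≤ J q := by
      intro q
      by_cases hA : J q ≤ b (n₀ + q) + 1
      · have hB := hfar q hA
        left; omega
      · right; omega
    rcases hfar' 0 with hc | hc
    · -- J increases beyond m
      have grow : ∀ q, J q = j₀ + q ∧ J q + 2 ≤ b (n₀ + q) := by
        intro q
        induction q with
        | zero => exact ⟨rfl, by rwa [hJ0]⟩
        | succ q ih =>
          obtain ⟨h1, h2⟩ := ih
          have hstep : J (q + 1) = J q + 1 := by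
            rw [hJs, towardIdx]
            split_ifs with hh hh2 <;> omega
          have hnext : J (q + 1) ≤ b (n₀ + (q + 1)) := by
            have := (hblip (n₀ + q)).2
            rw [show n₀ + q + 1 = n₀ + (q + 1) by omega] at this
            omega
          rcases hfar' (q + 1) with hd | hd
          · exact ⟨by omega, hd⟩
          · omega
      have := (grow (m + 1)).2
      have := hble (n₀ + (m + 1))
      have := (grow (m + 1)).1
      omega
    · -- J decreases below 0
      have dec : ∀ q, J q + q = j₀ ∧ b (n₀ + q) + 2 ≤ J q := by
        intro q
        induction q with
        | zero => exact ⟨rfl, by rwa [hJ0]⟩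
        | succ q ih =>
          obtain ⟨h1, h2⟩ := ih
          have hstep : J (q + 1) = J q - 1 := by
            rw [hJs, towardIdx]
            split_ifs with hh hh2 <;> omega
          have hnext : b (n₀ + (q + 1)) ≤ J (q + 1) := by
            have := (hblip (n₀ + q)).1
            rw [show n₀ + q + 1 = n₀ + (q + 1) by omega] at this
            omega
          rcases hfar' (q + 1) with hd | hd
          · omega
          · exact ⟨by omega, hd⟩
      have := (dec (j₀ + 1)).2
      have := (dec (j₀ + 1)).1
      omega
  obtain ⟨q, hq1, hq2⟩ := h2
  refine ⟨n₀ + q, persN (n₀ + q) ?_ ⟩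
  rw [hx (n₀ + q), guardMove_on hG U i _ (hJinv q).1 (hJinv q).2,
    towardIdx_eq hq2 hq1]

variable (U : Finset V)

noncomputable def chaseMove (hG : G.Connected)
    (hU : IsClusterGraph (G.induce ((↑U : Set V)ᶜ)) ∨ IsStarForest (G.induce ((↑U : Set V)ᶜ)))
    (x r : V) : V :=
  if hr : r ∈ ((↑U : Set V)ᶜ) then
    if G.Adj x r then r
    else if x = ↑(repOf hU ⟨r, hr⟩) then x
    else stepTo hG ↑(repOf hU ⟨r, hr⟩) x
  else x

lemma chase_catch (hG : G.Connected)
    (hU : IsClusterGraph (G.induce ((↑U : Set V)ᶜ)) ∨ IsStarForest (G.induce ((↑U : Set V)ᶜ)))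
    (x r : ℕ → V)
    (hx : ∀ n, x (n + 1) = chaseMove U hG hU (x n) (r n))
    (hrv : ∀ n, r (n + 1) = r n ∨ G.Adj (r n) (r (n + 1)))
    (hrU : ∀ n, r n ∈ ((↑U : Set V)ᶜ)) :
    ∃ n, x n = r n ∨ x (n + 1) = r n := by
  by_contra hc
  push_neg at hc
  have hnadj : ∀ n, ¬ G.Adj (x n) (r n) := by
    intro n hadj
    have : x (n + 1) = r n := by
      rw [hx n, chaseMove, dif_pos (hrU n), if_pos hadj]
    exact (hc n).2 this
  -- the representative is constant
  set ρ : ℕ → V := fun n => ↑(repOf hU ⟨r n, hrU n⟩) with hρ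
  have hρc : ∀ n, ρ n = ρ 0 := by
    intro n
    induction n with
    | zero => rfl
    | succ n ih =>
      rw [← ih]
      show (↑(repOf hU ⟨r (n+1), hrU (n+1)⟩) : V) = ↑(repOf hU ⟨r n, hrU n⟩)
      rcases hrv n with he | hadj
      · congr 1
        congr 1
        exact Subtype.ext he
      · have : (G.induce ((↑U : Set V)ᶜ)).Adj ⟨r n, hrU n⟩ ⟨r (n+1), hrU (n+1)⟩ := by
          simpa using hadj
        rw [repOf_adj_of_adj hU this]
  -- the cop is never at the representative
  have hxne : ∀ n, x n ≠ ρ n := by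
    intro n he
    rcases repOf_dom hU ⟨r n, hrU n⟩ with hd | hd
    · have : ρ n = r n := congrArg Subtype.val hd
      exact (hc n).1 (he.trans this)
    · have : G.Adj (ρ n) (r n) := by simpa using hd
      exact hnadj n (he ▸ this)
  -- so the cop always steps toward ρ 0, decreasing distance: contradiction
  have hstep : ∀ n, G.dist (x (n + 1)) (ρ 0) + 1 = G.dist (x n) (ρ 0) := by
    intro n
    have h1 : x (n + 1) = stepTo hG (ρ n) (x n) := by
      rw [hx n, chaseMove, dif_pos (hrU n), if_neg (hnadj n), if_neg (hxne n)]
    rw [h1, hρc n]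
    exact (stepTo_spec hG (by rw [← hρc n]; exact hxne n)).2
  obtain ⟨n, hn⟩ := exists_of_descend (P := fun _ => False)
    (f := fun n => G.dist (x n) (ρ 0)) (fun n => Or.inr (by show G.dist (x (n + 1)) (ρ 0) < G.dist (x n) (ρ 0); have := hstep n; omega))
  exact hn


lemma ptA_def (U : Finset V) (i : Fin (npU U)) (h : 2 * (i : ℕ) < U.card) :
    ptA U i = enumU U ⟨2 * i, h⟩ := rfl

lemma ptB_def (U : Finset V) (i : Fin (npU U)) (h : 2 * (i : ℕ) + 1 < U.card) :
    ptB U i = enumU U ⟨2 * i + 1, h⟩ := by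
  rw [ptB, dif_pos h]

lemma chaseMove_valid (U : Finset V) (hG : G.Connected)
    (hU : IsClusterGraph (G.induce ((↑U : Set V)ᶜ)) ∨ IsStarForest (G.induce ((↑U : Set V)ᶜ)))
    (x r : V) : chaseMove U hG hU x r = x ∨ G.Adj x (chaseMove U hG hU x r) := by
  rw [chaseMove]
  split_ifs with h1 h2 h3
  · exact Or.inr h2
  · exact Or.inl rfl
  · exact Or.inr (stepTo_spec hG h3).1
  · exact Or.inl rfl

-- ## the strategy
noncomputable def theStrat (hG : G.Connected) (U : Finset V)
    (hU : IsClusterGraph (G.induce ((↑U : Set V)ᶜ)) ∨ IsStarForest (G.induce ((↑U : Set V)ᶜ))) :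
    CopStrat G (npU U + 1) where
  init := fun _ => hG.nonempty.some
  move := fun c r i =>
    if h : (i : ℕ) < npU U then guardMove hG U ⟨i, h⟩ (c i) r else chaseMove U hG hU (c i) r
  valid := by
    intro c r i
    split_ifs with h
    · set i' : Fin (npU U) := ⟨i, h⟩
      by_cases hon : onPath hG U i' (c i)
      · obtain ⟨hle, hpl⟩ := idxP_spec hG U i' hon
        set j := idxP hG U i' (c i) with hj
        set b := shadow hG U i' r with hbdef
        have hb : b ≤ plen hG U i' := shadow_le hG U i' r
        rw [guardMove, dif_pos hon, ← hj, ← hbdef]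
        rw [towardIdx]
        split_ifs with h1 h2
        · right
          rw [← hpl]
          exact pl_adj hG U i' (by omega)
        · right
          rw [← hpl]
          have he : j - 1 + 1 = j := by omega
          have := pl_adj hG U i' (j := j - 1) (by omega)
          rw [he] at this
          exact this.symm
        · left; rw [← hpl]
      · right
        rw [guardMove, dif_neg hon]
        refine (stepTo_spec hG ?_).1
        intro he
        exact hon ⟨plen hG U i', le_refl _, by rw [pl_last]; exact he.symm⟩
    · exact chaseMove_valid U hG hU (c i) r

-- ## the winning argument
theorem copsWin_aux (hG : G.Connected) (U : Finset V)
    (hU : IsClusterGraph (G.induce ((↑U : Set V)ᶜ)) ∨ IsStarForest (G.induce ((↑U : Set V)ᶜ))) :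
    CopsWin G (npU U + 1) := by
  classical
  refine ⟨theStrat hG U hU, ?_⟩
  intro RS
  by_contra hnc
  set CS := theStrat hG U hU with hCS
  set P : ℕ → (Fin (npU U + 1) → V) × V := gplay CS.init CS.move RS.init RS.move with hP
  simp only [gCaught, not_exists, not_or] at hnc
  have H1 : ∀ n i, (P n).1 i ≠ (P n).2 := fun n i => (hnc n i).1
  have hPsucc : ∀ n, P (n + 1) =
      (CS.move (P n).1 (P n).2, RS.move (CS.move (P n).1 (P n).2) (P n).2) := fun n => rfl
  have H2 : ∀ n i, (P (n + 1)).1 i ≠ (P n).2 := by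
    intro n i
    rw [hPsucc n]
    exact (hnc n i).2
  have hrv : ∀ n, (P (n + 1)).2 = (P n).2 ∨ G.Adj (P n).2 (P (n + 1)).2 := by
    intro n
    rw [hPsucc n]
    exact RS.valid _ _
  -- guard cops
  have hmoveG : ∀ n (i : Fin (npU U)),
      (P (n + 1)).1 ⟨i, by omega⟩ = guardMove hG U i ((P n).1 ⟨i, by omega⟩) (P n).2 := by
    intro n i
    rw [hPsucc n]
    show (if h : ((⟨(i : ℕ), by omega⟩ : Fin (npU U + 1)) : ℕ) < npU U then _ else _) = _
    rw [dif_pos (show ((⟨(i : ℕ), by omega⟩ : Fin (npU U + 1)) : ℕ) < npU U from i.2)]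
  have hGR : ∀ i : Fin (npU U), ∃ N, ∀ n, N ≤ n →
      (P (n + 1)).1 ⟨i, by omega⟩ = pl hG U i (shadow hG U i ((P n).2)) := by
    intro i
    exact guard_reach hG U i (fun n => (P n).1 ⟨i, by omega⟩) (fun n => (P n).2)
      (hmoveG · i) hrv
  choose N hN using hGR
  set T : ℕ := Finset.univ.sup N with hT
  have hguard : ∀ n, T ≤ n → ∀ i : Fin (npU U),
      (P (n + 1)).1 ⟨i, by omega⟩ = pl hG U i (shadow hG U i ((P n).2)) := by
    intro n hn i
    exact hN i n (le_trans (Finset.le_sup (Finset.mem_univ i)) hn)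
  -- robber is off U after time T
  have hoffU : ∀ n, T ≤ n → (P n).2 ∈ ((↑U : Set V)ᶜ) := by
    intro n hn
    by_contra hmem
    have hmem' : (P n).2 ∈ U := by simpa using hmem
    obtain ⟨j, hj⟩ := enumU_surj U hmem'
    have hjlt := j.2
    set i : Fin (npU U) := ⟨(j : ℕ) / 2, by unfold npU; omega⟩ with hi
    have hr : ∃ l, l ≤ plen hG U i ∧ pl hG U i l = (P n).2 := by
      by_cases hpar : (j : ℕ) % 2 = 0
      · refine ⟨0, Nat.zero_le _, ?_⟩
        rw [pl_zero, ptA_def U i (by omega : 2 * ((j : ℕ) / 2) < U.card)]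
        rw [← hj]
        congr 1
        exact Fin.ext (by show 2 * ((j : ℕ) / 2) = (j : ℕ); omega)
      · refine ⟨plen hG U i, le_refl _, ?_⟩
        rw [pl_last, ptB_def U i (by omega : 2 * ((j : ℕ) / 2) + 1 < U.card)]
        rw [← hj]
        congr 1
        exact Fin.ext (by show 2 * ((j : ℕ) / 2) + 1 = (j : ℕ); omega)
    obtain ⟨l, hl, hpll⟩ := hr
    have := hguard n hn i
    rw [← hpll, shadow_pl hG U i hl, hpll] at this
    exact H2 n ⟨i, by omega⟩ this
  -- chase cop
  set ℓ : Fin (npU U + 1) := ⟨npU U, by omega⟩ with hℓ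
  have hmoveC : ∀ n, (P (n + 1)).1 ℓ = chaseMove U hG hU ((P n).1 ℓ) (P n).2 := by
    intro n
    rw [hPsucc n]
    show (if h : ((ℓ : ℕ)) < npU U then _ else _) = _
    rw [dif_neg (by simp [hℓ])]
  obtain ⟨q, hq⟩ := chase_catch U hG hU (fun q => (P (T + q)).1 ℓ) (fun q => (P (T + q)).2)
    (fun q => by
      show (P (T + q + 1)).1 ℓ = _
      exact hmoveC (T + q))
    (fun q => by
      show (P (T + q + 1)).2 = _ ∨ _
      exact hrv (T + q))
    (fun q => hoffU (T + q) (by omega))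
  rcases hq with hq | hq
  · exact H1 (T + q) ℓ hq
  · exact H2 (T + q) ℓ hq


end Aux

/-- If `t` is the minimum size of a cluster vertex deletion set (resp. of a
deletion-to-stars set) of a connected graph `G`, then `c(G) ≤ ⌈t/2⌉ + 1`. -/
theorem copNumber_le_cvd_dts
    {V : Type*} [Fintype V] (G : SimpleGraph V) (hG : G.Connected) (t : ℕ) :
    (t = cvdNumber G → copNumber G ≤ (t + 1) / 2 + 1) ∧
      (t = dtsNumber G → copNumber G ≤ (t + 1) / 2 + 1) := by
  constructor
  · intro ht
    have hne : {s | ∃ U : Finset V,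
        IsClusterGraph (G.induce ((↑U : Set V)ᶜ)) ∧ U.card = s}.Nonempty := by
      refine ⟨(Finset.univ : Finset V).card, Finset.univ, ?_, rfl⟩
      intro x y z hxy hyz
      exact absurd (Finset.mem_univ (x : V)) (by simpa using x.2)
    obtain ⟨U, hU, hcard⟩ := Nat.sInf_mem hne
    have hw : CopsWin G ((t + 1) / 2 + 1) := by
      have := copsWin_aux hG U (Or.inl hU)
      rwa [npU, hcard, ← cvdNumber, ← ht] at this
    exact Nat.sInf_le hw
  · intro ht
    have hne : {s | ∃ U : Finset V,
        IsStarForest (G.induce ((↑U : Set V)ᶜ)) ∧ U.card = s}.Nonempty := by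
      refine ⟨(Finset.univ : Finset V).card, Finset.univ, ?_, rfl⟩
      intro x y hxy
      exact absurd (Finset.mem_univ (x : V)) (by simpa using x.2)
    obtain ⟨U, hU, hcard⟩ := Nat.sInf_mem hne
    have hw : CopsWin G ((t + 1) / 2 + 1) := by
      have := copsWin_aux hG U (Or.inr hU)
      rwa [npU, hcard, ← dtsNumber, ← ht] at this
    exact Nat.sInf_le hw
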